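/- Let H be a real Hilbert space, A : H ⇒ H a maximally monotone operator, and V a closed vector subspace of H. Then the partial inverse A_V, defined by (x,u) ∈ gra A_V ⟺ (P_V x + P_{V⊥} u, P_V u + P_{V⊥} x) ∈ gra A, is maximally monotone. -/

import Mathlib

open scoped RealInnerProductSpace

/-- Partial inverse of a set-valued operator `A` with respect to a closed subspace `V`:
`(x, u) ∈ gra A_V ↔ (P_V x + P_{V⊥} u, P_V u + P_{V⊥} x) ∈ gra A`. -/
def partialInv {H : Type*} [NormedAddCommGroup H] [InnerProductSpace ℝ H] [CompleteSpace H]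
    (A : H → Set H) (V : Submodule ℝ H) [CompleteSpace V] : H → Set H :=
  fun x => {u | ((V.orthogonalProjectionOnto u : H) + (x - (V.orthogonalProjectionOnto x : H)))
    ∈ A ((V.orthogonalProjectionOnto x : H) + (u - (V.orthogonalProjectionOnto u : H)))}

section Aux

set_option linter.unusedSectionVars false

variable {H : Type*} [NormedAddCommGroup H] [InnerProductSpace ℝ H] [CompleteSpace H]
  (V : Submodule ℝ H) [CompleteSpace V]

private lemma ortho0 (c d : H) :
    ⟪(V.orthogonalProjectionOnto c : H), d - (V.orthogonalProjectionOnto d : H)⟫ = 0 :=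
  Submodule.inner_right_of_mem_orthogonal (V.orthogonalProjectionOnto c).2
    (by exact V.sub_starProjection_mem_orthogonal d : d - (V.orthogonalProjectionOnto d : H) ∈ Vᗮ)

private lemma key (a b : H) :
    ⟪(V.orthogonalProjectionOnto a : H) + (b - (V.orthogonalProjectionOnto b : H)),
      (V.orthogonalProjectionOnto b : H) + (a - (V.orthogonalProjectionOnto a : H))⟫ = ⟪a, b⟫ := by
  set p : H := (V.orthogonalProjectionOnto a : H) with hp
  set q : H := (V.orthogonalProjectionOnto b : H) with hq
  have h1 : ⟪p, a - p⟫ = 0 := ortho0 V a a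
  have h2 : ⟪q, b - q⟫ = 0 := ortho0 V b b
  have h3 : ⟪p, b - q⟫ = 0 := ortho0 V a b
  have h4 : ⟪q, a - p⟫ = 0 := ortho0 V b a
  have c1 : ⟪b - q, q⟫ = ⟪q, b - q⟫ := real_inner_comm _ _
  have c2 : ⟪b - q, a - p⟫ = ⟪a - p, b - q⟫ := real_inner_comm _ _
  have c3 : ⟪a - p, q⟫ = ⟪q, a - p⟫ := real_inner_comm _ _
  have expand : ∀ s t w z : H, ⟪s + t, w + z⟫ = ⟪s, w⟫ + ⟪s, z⟫ + ⟪t, w⟫ + ⟪t, z⟫ := by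
    intro s t w z
    rw [inner_add_left, inner_add_right, inner_add_right]; ring
  have ha : a = p + (a - p) := by abel
  have hb : b = q + (b - q) := by abel
  have e2 : ⟪a, b⟫ = ⟪p, q⟫ + ⟪p, b - q⟫ + ⟪a - p, q⟫ + ⟪a - p, b - q⟫ := by
    conv_lhs => rw [ha, hb]
    rw [expand]
  rw [expand]
  linarith

private lemma hP (a b : H) : (V.orthogonalProjectionOnto (a - b) : H) =
    (V.orthogonalProjectionOnto a : H) - (V.orthogonalProjectionOnto b : H) := by
  rw [map_sub]; rfl

private lemma projmix (a b : H) :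
    (V.orthogonalProjectionOnto ((V.orthogonalProjectionOnto a : H)
      + (b - (V.orthogonalProjectionOnto b : H))) : H) = (V.orthogonalProjectionOnto a : H) := by
  rw [map_add, Submodule.coe_add, Submodule.orthogonalProjectionOnto_mem_subspace_eq_self (V.orthogonalProjectionOnto a),
    Submodule.orthogonalProjectionOnto_apply_of_mem_orthogonal
      (by exact V.sub_starProjection_mem_orthogonal b : b - (V.orthogonalProjectionOnto b : H) ∈ Vᗮ)]
  simp

private lemma diffkey (x y u v : H) :
    ⟪((V.orthogonalProjectionOnto x : H) + (u - (V.orthogonalProjectionOnto u : H)))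
        - ((V.orthogonalProjectionOnto y : H) + (v - (V.orthogonalProjectionOnto v : H))),
      ((V.orthogonalProjectionOnto u : H) + (x - (V.orthogonalProjectionOnto x : H)))
        - ((V.orthogonalProjectionOnto v : H) + (y - (V.orthogonalProjectionOnto y : H)))⟫
      = ⟪x - y, u - v⟫ := by
  have h1 : ((V.orthogonalProjectionOnto x : H) + (u - (V.orthogonalProjectionOnto u : H)))
      - ((V.orthogonalProjectionOnto y : H) + (v - (V.orthogonalProjectionOnto v : H)))
      = (V.orthogonalProjectionOnto (x - y) : H)
        + ((u - v) - (V.orthogonalProjectionOnto (u - v) : H)) := by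
    rw [hP, hP]; abel
  have h2 : ((V.orthogonalProjectionOnto u : H) + (x - (V.orthogonalProjectionOnto x : H)))
      - ((V.orthogonalProjectionOnto v : H) + (y - (V.orthogonalProjectionOnto y : H)))
      = (V.orthogonalProjectionOnto (u - v) : H)
        + ((x - y) - (V.orthogonalProjectionOnto (x - y) : H)) := by
    rw [hP, hP]; abel
  rw [h1, h2, key]

end Aux

theorem stmt17 {H : Type*} [NormedAddCommGroup H] [InnerProductSpace ℝ H] [CompleteSpace H]
    (A : H → Set H) (V : Submodule ℝ H) [CompleteSpace V]
    (hmono : ∀ x y u v : H, u ∈ A x → v ∈ A y → 0 ≤ ⟪x - y, u - v⟫)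
    (hmax : ∀ x u : H, (∀ y v : H, v ∈ A y → 0 ≤ ⟪x - y, u - v⟫) → u ∈ A x) :
    (∀ x y u v : H, u ∈ partialInv A V x → v ∈ partialInv A V y → 0 ≤ ⟪x - y, u - v⟫) ∧
      (∀ x u : H, (∀ y v : H, v ∈ partialInv A V y → 0 ≤ ⟪x - y, u - v⟫) →
        u ∈ partialInv A V x) := by
  constructor
  · intro x y u v hu hv
    have h := hmono _ _ _ _ hu hv
    rwa [diffkey] at h
  · intro x u hcond
    show ((V.orthogonalProjectionOnto u : H) + (x - (V.orthogonalProjectionOnto x : H)))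
      ∈ A ((V.orthogonalProjectionOnto x : H) + (u - (V.orthogonalProjectionOnto u : H)))
    apply hmax
    intro y' v' hv'
    have hPy : (V.orthogonalProjectionOnto ((V.orthogonalProjectionOnto y' : H)
        + (v' - (V.orthogonalProjectionOnto v' : H))) : H) = (V.orthogonalProjectionOnto y' : H) :=
      projmix V y' v'
    have hPv : (V.orthogonalProjectionOnto ((V.orthogonalProjectionOnto v' : H)
        + (y' - (V.orthogonalProjectionOnto y' : H))) : H) = (V.orthogonalProjectionOnto v' : H) :=
      projmix V v' y'
    have hmem : ((V.orthogonalProjectionOnto v' : H) + (y' - (V.orthogonalProjectionOnto y' : H)))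
        ∈ partialInv A V ((V.orthogonalProjectionOnto y' : H)
          + (v' - (V.orthogonalProjectionOnto v' : H))) := by
      show _ ∈ A _
      rw [hPy, hPv]
      have e1 : (V.orthogonalProjectionOnto v' : H)
          + ((V.orthogonalProjectionOnto y' : H) + (v' - (V.orthogonalProjectionOnto v' : H))
            - (V.orthogonalProjectionOnto y' : H)) = v' := by abel
      have e2 : (V.orthogonalProjectionOnto y' : H)
          + ((V.orthogonalProjectionOnto v' : H) + (y' - (V.orthogonalProjectionOnto y' : H))
            - (V.orthogonalProjectionOnto v' : H)) = y' := by abel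
      rw [e1, e2]
      exact hv'
    have h := hcond _ _ hmem
    have hfin := diffkey V x ((V.orthogonalProjectionOnto y' : H)
      + (v' - (V.orthogonalProjectionOnto v' : H))) u
      ((V.orthogonalProjectionOnto v' : H) + (y' - (V.orthogonalProjectionOnto y' : H)))
    rw [hPy, hPv] at hfin
    have e1 : (V.orthogonalProjectionOnto y' : H)
        + ((V.orthogonalProjectionOnto v' : H) + (y' - (V.orthogonalProjectionOnto y' : H))
          - (V.orthogonalProjectionOnto v' : H)) = y' := by abel
    have e2 : (V.orthogonalProjectionOnto v' : H)
        + ((V.orthogonalProjectionOnto y' : H) + (v' - (V.orthogonalProjectionOnto v' : H))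
          - (V.orthogonalProjectionOnto y' : H)) = v' := by abel
    rw [e1, e2] at hfin
    rw [← hfin] at h
    exact h
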